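/- Let S be a nonempty strong-inductive cubical set in the n-dimensional cube B_n. Then the homology of the chain complex (S, ∂), graded by dimension, satisfies H_0(S) ≅ ℤ/2ℤ and H_i(S) = 0 for all i > 0. -/

import Mathlib

/-- A face of the `n`-dimensional cube: a function `Fin n → Fin 3`,
where `0` stands for `0`, `1` stands for `*`, and `2` stands for `1`. -/
abbrev Face (n : ℕ) := Fin n → Fin 3

/-- The dimension of a face: the number of indices mapped to `*` (encoded as `1 : Fin 3`). -/
def fdim {n : ℕ} (f : Face n) : ℕ := (Finset.univ.filter fun i => f i = 1).card

/-- `Adj f g` : the face `g` appears in the boundary `∂ f`, i.e. `g` is obtained from `f`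
by replacing a single occurrence of `*` by `0` or by `1`. -/
def Adj {n : ℕ} (f g : Face n) : Prop :=
  ∃ i, f i = 1 ∧ g i ≠ 1 ∧ ∀ j, j ≠ i → g j = f j

instance {n : ℕ} (f g : Face n) : Decidable (Adj f g) := by unfold Adj; infer_instance

/-- A cubical set is inductive if it is downward closed for the pointwise order
induced by `0 < * < 1`. -/
def Inductive {n : ℕ} (S : Finset (Face n)) : Prop :=
  ∀ f ∈ S, ∀ f' : Face n, (∀ i, f' i ≤ f i) → f' ∈ S

/-- Strong-inductive: inductive, and every maximal face has dimension `0`. -/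
def StrongInductive {n : ℕ} (S : Finset (Face n)) : Prop :=
  Inductive S ∧ ∀ f ∈ S, (∀ g ∈ S, (∀ i, f i ≤ g i) → g = f) → fdim f = 0

/-- The degree-`k` part of the chain complex of the cubical set `S` over `ℤ/2ℤ`:
the `ℤ/2ℤ`-vector space with basis the faces of `S` of dimension `k`. -/
abbrev Chain {n : ℕ} (S : Finset (Face n)) (k : ℕ) : Type :=
  {f : Face n // f ∈ S ∧ fdim f = k} → ZMod 2

/-- The boundary map `∂ : Chain S k → Chain S (k-1)`: a basis face is sent to the sum of
the faces appearing in its boundary. -/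
noncomputable def bd {n : ℕ} (S : Finset (Face n)) (k : ℕ) :
    Chain S k →ₗ[ZMod 2] Chain S (k - 1) :=
  Matrix.mulVecLin
    (Matrix.of fun (g : {f : Face n // f ∈ S ∧ fdim f = k - 1})
      (f : {f : Face n // f ∈ S ∧ fdim f = k}) => if Adj f.1 g.1 then (1 : ZMod 2) else 0)

/-- The degree-`k` homology of the chain complex `(S, ∂)`:
`ker ∂_k` modulo (the pullback of) `im ∂_{k+1}`. -/
abbrev CubeHomology {n : ℕ} (S : Finset (Face n)) (k : ℕ) : Type :=
  LinearMap.ker (bd S k) ⧸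
    Submodule.comap (LinearMap.ker (bd S k)).subtype (LinearMap.range (bd S (k + 1)))


section Basic
variable {n : ℕ}

lemma fin3_cases (a : Fin 3) : a = 0 ∨ a = 1 ∨ a = 2 := by
  fin_cases a <;> simp

lemma fdim_eq_zero_iff (f : Face n) : fdim f = 0 ↔ ∀ i, f i ≠ 1 := by
  simp [fdim, Finset.card_eq_zero, Finset.filter_eq_empty_iff]

lemma fdim_update_one {f : Face n} {i : Fin n} (h : f i ≠ 1) :
    fdim (Function.update f i 1) = fdim f + 1 := by
  have : (Finset.univ.filter fun j => Function.update f i 1 j = 1)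
      = insert i (Finset.univ.filter fun j => f j = 1) := by
    ext j
    rcases eq_or_ne j i with rfl | hj
    · simp
    · simp [Function.update_of_ne hj, hj]
  rw [fdim, this, Finset.card_insert_of_notMem (by simp [h]), fdim]

lemma fdim_update_two {f : Face n} {i : Fin n} (h : f i = 1) :
    fdim (Function.update f i 2) + 1 = fdim f := by
  have : (Finset.univ.filter fun j => Function.update f i 2 j = 1)
      = (Finset.univ.filter fun j => f j = 1).erase i := by
    ext j
    rcases eq_or_ne j i with rfl | hj
    · simp
    · simp [Function.update_of_ne hj, hj]
  rw [fdim, this, fdim, Finset.card_erase_add_one (by simp [h])]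

lemma fdim_update_ne {f : Face n} {i : Fin n} {c : Fin 3} (h : f i ≠ 1) (hc : c ≠ 1) :
    fdim (Function.update f i c) = fdim f := by
  have : (Finset.univ.filter fun j => Function.update f i c j = 1)
      = (Finset.univ.filter fun j => f j = 1) := by
    ext j
    rcases eq_or_ne j i with rfl | hj
    · simp [hc, h]
    · simp [Function.update_of_ne hj]
  rw [fdim, this, fdim]

variable {S : Finset (Face n)} (hS : StrongInductive S)

lemma star_mem (hS : StrongInductive S) {f : Face n} (hf : f ∈ S) {i : Fin n} (h : f i = 1) :
    Function.update f i 2 ∈ S := by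
  classical
  obtain ⟨m, hmM, hmax⟩ := (S.filter fun g => ∀ j, f j ≤ g j).exists_maximal
      ⟨f, by simp [hf]⟩
  rw [Finset.mem_filter] at hmM
  obtain ⟨hmS, hfm⟩ := hmM
  have hmaxS : ∀ g ∈ S, (∀ j, m j ≤ g j) → g = m := by
    intro g hg hmg
    have hgM : g ∈ S.filter fun g => ∀ j, f j ≤ g j := by
      simp only [Finset.mem_filter]
      exact ⟨hg, fun j => le_trans (hfm j) (hmg j)⟩
    by_contra hne
    exact hne (le_antisymm (hmax hgM (fun j => hmg j)) (fun j => hmg j))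
  have hdim : fdim m = 0 := hS.2 m hmS hmaxS
  have hmi : m i = 2 := by
    have h1 : (1 : Fin 3) ≤ m i := h ▸ hfm i
    have h2 : m i ≠ 1 := (fdim_eq_zero_iff m).mp hdim i
    rcases fin3_cases (m i) with h3 | h3 | h3
    · rw [h3] at h1; exact absurd h1 (by decide)
    · exact absurd h3 h2
    · exact h3
  refine hS.1 m hmS _ (fun j => ?_)
  rcases eq_or_ne j i with rfl | hj
  · simp [hmi]
  · simp [Function.update_of_ne hj, hfm j]

lemma zero_mem (hS : StrongInductive S) (hne : S.Nonempty) : (fun _ => 0 : Face n) ∈ S := by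
  obtain ⟨s, hs⟩ := hne
  exact hS.1 s hs _ (fun i => Fin.zero_le _)

lemma down_mem (hS : StrongInductive S) {f : Face n} (hf : f ∈ S) {i : Fin n} {c : Fin 3}
    (h : c ≤ f i) : Function.update f i c ∈ S := by
  refine hS.1 f hf _ (fun j => ?_)
  rcases eq_or_ne j i with rfl | hj
  · simp [h]
  · simp [Function.update_of_ne hj]

end Basic

open Finset Function
lemma z2 (a : ZMod 2) : a + a = 0 := CharTwo.add_self_eq_zero a
section Ops
variable {n : ℕ}

abbrev W (n : ℕ) := Face n → ZMod 2

noncomputable def Dop (x : W n) : W n :=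
  fun g => ∑ i, if g i ≠ 1 then x (Function.update g i 1) else 0

noncomputable def hOp (i : Fin n) (x : W n) : W n :=
  fun g => if g i = 1 then x (Function.update g i 2) else 0

noncomputable def rOp (i : Fin n) (x : W n) : W n :=
  fun g => if g i = 0 then x g + x (Function.update g i 2) else 0

noncomputable def rr : ℕ → W n → W n
  | 0, x => x
  | m+1, x => if h : m < n then rOp ⟨m, h⟩ (rr m x) else rr m x

noncomputable def HH : ℕ → W n → W n
  | 0, _ => 0
  | m+1, x => (if h : m < n then hOp ⟨m, h⟩ (rr m x) else 0) + HH m x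

lemma Dop_add (x y : W n) : Dop (x + y) = Dop x + Dop y := by
  funext g
  simp only [Dop, Pi.add_apply, ← Finset.sum_add_distrib]
  refine Finset.sum_congr rfl fun i _ => ?_
  split <;> simp

lemma I1 (i : Fin n) (x : W n) (g : Face n) :
    Dop (hOp i x) g + hOp i (Dop x) g = x g + rOp i x g := by
  classical
  rcases fin3_cases (g i) with hgi | hgi | hgi
  · -- g i = 0
    have h1 : Dop (hOp i x) g = x (Function.update g i 2) := by
      rw [Dop, ← Finset.add_sum_erase _ _ (Finset.mem_univ i)]
      have ha : (if g i ≠ 1 then hOp i x (Function.update g i 1) else 0)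
          = x (Function.update g i 2) := by
        rw [if_pos (by simp [hgi]), hOp, if_pos (by simp), Function.update_idem]
      have hb : ∀ j ∈ Finset.univ.erase i,
          (if g j ≠ 1 then hOp i x (Function.update g j 1) else 0) = 0 := by
        intro j hj
        have hji : j ≠ i := (Finset.mem_erase.mp hj).1
        split
        · rw [hOp, if_neg (by rw [Function.update_of_ne hji.symm]; simp [hgi])]
        · rfl
      rw [ha, Finset.sum_eq_zero hb, add_zero]
    have h2 : hOp i (Dop x) g = 0 := by
      rw [hOp, if_neg (by simp [hgi])]
    rw [h1, h2, rOp, if_pos hgi, add_zero, ← add_assoc, z2, zero_add]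
  · -- g i = 1
    have h1 : Dop (hOp i x) g
        = ∑ j ∈ Finset.univ.erase i,
            (if g j ≠ 1 then x (Function.update (Function.update g j 1) i 2) else 0) := by
      rw [Dop, ← Finset.add_sum_erase _ _ (Finset.mem_univ i), if_neg (by simp [hgi]),
        zero_add]
      refine Finset.sum_congr rfl fun j hj => ?_
      have hji : j ≠ i := (Finset.mem_erase.mp hj).1
      split
      · rw [hOp, if_pos (by rw [Function.update_of_ne hji.symm]; exact hgi)]
      · rfl
    have h2 : hOp i (Dop x) g
        = x g + ∑ j ∈ Finset.univ.erase i,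
            (if g j ≠ 1 then x (Function.update (Function.update g j 1) i 2) else 0) := by
      rw [hOp, if_pos hgi, Dop, ← Finset.add_sum_erase _ _ (Finset.mem_univ i)]
      congr 1
      · rw [if_pos (by rw [Function.update_self]; decide), Function.update_idem]
        conv_rhs => rw [← Function.update_eq_self i g]
        rw [hgi]
      · refine Finset.sum_congr rfl fun j hj => ?_
        have hji : j ≠ i := (Finset.mem_erase.mp hj).1
        rw [Function.update_of_ne hji]
        split
        · rw [Function.update_comm hji.symm]
        · rfl
    rw [h1, h2, rOp, if_neg (by simp [hgi]), add_zero, ← add_assoc]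
    rw [add_comm (∑ j ∈ _, _) (x g), add_assoc, z2, add_zero]
  · -- g i = 2
    have h1 : Dop (hOp i x) g = x g := by
      rw [Dop, ← Finset.add_sum_erase _ _ (Finset.mem_univ i)]
      have ha : (if g i ≠ 1 then hOp i x (Function.update g i 1) else 0) = x g := by
        rw [if_pos (by simp [hgi]), hOp, if_pos (by simp), Function.update_idem]
        conv_rhs => rw [← Function.update_eq_self i g]
        rw [hgi]
      have hb : ∀ j ∈ Finset.univ.erase i,
          (if g j ≠ 1 then hOp i x (Function.update g j 1) else 0) = 0 := by
        intro j hj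
        have hji : j ≠ i := (Finset.mem_erase.mp hj).1
        split
        · rw [hOp, if_neg (by rw [Function.update_of_ne hji.symm]; simp [hgi])]
        · rfl
      rw [ha, Finset.sum_eq_zero hb, add_zero]
    have h2 : hOp i (Dop x) g = 0 := by
      rw [hOp, if_neg (by simp [hgi])]
    rw [h1, h2, rOp, if_neg (by simp [hgi]), add_zero]

lemma I2 (i : Fin n) (x : W n) (g : Face n) :
    rOp i (Dop x) g = Dop (rOp i x) g := by
  classical
  rcases eq_or_ne (g i) 0 with hgi | hgi
  · have h1 : rOp i (Dop x) g
        = (x (Function.update g i 1) + x (Function.update g i 1))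
          + ∑ j ∈ Finset.univ.erase i,
            (if g j ≠ 1 then
              x (Function.update g j 1)
                + x (Function.update (Function.update g j 1) i 2) else 0) := by
      rw [rOp, if_pos hgi, Dop, Dop,
        ← Finset.add_sum_erase _ _ (Finset.mem_univ i),
        ← Finset.add_sum_erase _ (fun j => if Function.update g i 2 j ≠ 1 then _ else 0)
          (Finset.mem_univ i)]
      rw [if_pos (by simp [hgi]), if_pos (by rw [Function.update_self]; decide),
        Function.update_idem]
      rw [add_add_add_comm, ← Finset.sum_add_distrib]
      congr 1
      refine Finset.sum_congr rfl fun j hj => ?_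
      have hji : j ≠ i := (Finset.mem_erase.mp hj).1
      rw [Function.update_of_ne hji]
      split
      · rw [Function.update_comm hji.symm]
      · rw [add_zero]
    have h2 : Dop (rOp i x) g
        = ∑ j ∈ Finset.univ.erase i,
            (if g j ≠ 1 then
              x (Function.update g j 1)
                + x (Function.update (Function.update g j 1) i 2) else 0) := by
      rw [Dop, ← Finset.add_sum_erase _ _ (Finset.mem_univ i)]
      rw [if_pos (by simp [hgi]), rOp, if_neg (by rw [Function.update_self]; decide),
        zero_add]
      refine Finset.sum_congr rfl fun j hj => ?_
      have hji : j ≠ i := (Finset.mem_erase.mp hj).1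
      split
      · rw [rOp, if_pos (by rw [Function.update_of_ne hji.symm]; exact hgi)]
      · rfl
    rw [h1, h2, z2, zero_add]
  · have h1 : rOp i (Dop x) g = 0 := by rw [rOp, if_neg hgi]
    have h2 : Dop (rOp i x) g = 0 := by
      rw [Dop]
      refine Finset.sum_eq_zero fun j _ => ?_
      split
      · rw [rOp, if_neg ?_]
        rcases eq_or_ne j i with rfl | hji
        · rw [Function.update_self]; decide
        · rw [Function.update_of_ne hji.symm]; exact hgi
      · rfl
    rw [h1, h2]

end Ops
section Stage3
variable {n : ℕ}

lemma Dop_zero : Dop (0 : W n) = 0 := by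
  funext g; simp [Dop]

lemma rr_comm (m : ℕ) (x : W n) : rr m (Dop x) = Dop (rr m x) := by
  induction m with
  | zero => rfl
  | succ m ih =>
    by_cases h : m < n
    · simp only [rr, dif_pos h, ih]
      funext g
      exact I2 ⟨m, h⟩ (rr m x) g
    · simp only [rr, dif_neg h, ih]

lemma master (m : ℕ) (x : W n) :
    Dop (HH m x) + HH m (Dop x) = x + rr m x := by
  induction m with
  | zero =>
    funext g
    simp [HH, rr, Dop_zero, z2]
  | succ m ih =>
    by_cases h : m < n
    · simp only [HH, rr, dif_pos h, Dop_add, rr_comm]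
      funext g
      have e1 := I1 ⟨m, h⟩ (rr m x) g
      have e2 := congrFun ih g
      simp only [Pi.add_apply] at e1 e2 ⊢
      have h2 : (2 : ZMod 2) = 0 := rfl
      linear_combination e1 + e2 + rr m x g * h2
    · simp only [HH, rr, dif_neg h, Dop_add, Dop_zero]
      funext g
      have e2 := congrFun ih g
      simp only [Pi.add_apply, Pi.zero_apply, zero_add] at e2 ⊢
      linear_combination e2

lemma rOp_ne {i : Fin n} {y : W n} {g : Face n} (h : rOp i y g ≠ 0) :
    g i = 0 ∧ (y g ≠ 0 ∨ y (Function.update g i 2) ≠ 0) := by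
  by_cases h0 : g i = 0
  · refine ⟨h0, ?_⟩
    by_contra hc
    push_neg at hc
    rw [rOp, if_pos h0, hc.1, hc.2, add_zero] at h
    exact h rfl
  · rw [rOp, if_neg h0] at h; exact absurd rfl h

lemma hOp_ne {i : Fin n} {y : W n} {g : Face n} (h : hOp i y g ≠ 0) :
    g i = 1 ∧ y (Function.update g i 2) ≠ 0 := by
  by_cases h0 : g i = 1
  · refine ⟨h0, ?_⟩
    rw [hOp, if_pos h0] at h
    exact h
  · rw [hOp, if_neg h0] at h; exact absurd rfl h

lemma Dop_ne {x : W n} {g : Face n} (h : Dop x g ≠ 0) :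
    ∃ i : Fin n, g i ≠ 1 ∧ x (Function.update g i 1) ≠ 0 := by
  by_contra hc
  push_neg at hc
  apply h
  rw [Dop]
  refine Finset.sum_eq_zero fun i _ => ?_
  by_cases h1 : g i = 1
  · rw [if_neg (by simp [h1])]
  · rw [if_pos h1, hc i h1]

variable {S : Finset (Face n)}

/-- preservation of support in `S` with fixed dimension. -/
lemma rr_supp_S (hS : StrongInductive S) (m : ℕ) {k : ℕ} {x : W n}
    (hx : ∀ g, x g ≠ 0 → g ∈ S ∧ fdim g = k) :
    ∀ g, rr m x g ≠ 0 → g ∈ S ∧ fdim g = k := by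
  induction m with
  | zero => exact hx
  | succ m ih =>
    intro g hg
    by_cases h : m < n
    · rw [rr, dif_pos h] at hg
      obtain ⟨h0, hy⟩ := rOp_ne hg
      rcases hy with hy | hy
      · exact ih g hy
      · obtain ⟨hmem, hdim⟩ := ih _ hy
        have h0' : g ⟨m, h⟩ ≠ 1 := by rw [h0]; decide
        constructor
        · have := hS.1 _ hmem g (fun j => ?_)
          · exact this
          rcases eq_or_ne j ⟨m, h⟩ with rfl | hj
          · rw [Function.update_self, h0]; decide
          · rw [Function.update_of_ne hj]
        · rw [← hdim, fdim_update_ne h0' (by decide)]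
    · rw [rr, dif_neg h] at hg
      exact ih g hg

lemma rr_supp_lt (m : ℕ) (x : W n) :
    ∀ g, rr m x g ≠ 0 → ∀ j : Fin n, (j : ℕ) < m → g j = 0 := by
  induction m with
  | zero => intro g _ j hj; omega
  | succ m ih =>
    intro g hg j hj
    by_cases h : m < n
    · rw [rr, dif_pos h] at hg
      obtain ⟨h0, hy⟩ := rOp_ne hg
      rcases eq_or_ne j ⟨m, h⟩ with rfl | hjm
      · exact h0
      · have hjm' : (j : ℕ) < m := by
          rcases Nat.lt_succ_iff_lt_or_eq.mp hj with h' | h'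
          · exact h'
          · exact absurd (Fin.ext h') hjm
        rcases hy with hy | hy
        · exact ih g hy j hjm'
        · have := ih _ hy j hjm'
          rwa [Function.update_of_ne hjm] at this
    · rw [rr, dif_neg h] at hg
      exact ih g hg j (by omega)

lemma rr_supp_one (m : ℕ) {x : W n} (hx : ∀ g, x g ≠ 0 → ∃ j, g j = 1) :
    ∀ g, rr m x g ≠ 0 → ∃ j, g j = 1 := by
  induction m with
  | zero => exact hx
  | succ m ih =>
    intro g hg
    by_cases h : m < n
    · rw [rr, dif_pos h] at hg
      obtain ⟨h0, hy⟩ := rOp_ne hg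
      rcases hy with hy | hy
      · exact ih g hy
      · obtain ⟨j, hj⟩ := ih _ hy
        have hjm : j ≠ ⟨m, h⟩ := by
          intro hc
          rw [hc, Function.update_self] at hj
          exact absurd hj (by decide)
        rw [Function.update_of_ne hjm] at hj
        exact ⟨j, hj⟩
    · rw [rr, dif_neg h] at hg
      exact ih g hg

/-- `rr n x = 0` when `x` is supported on positive-dimensional faces. -/
lemma rr_n_eq_zero {x : W n} (hx : ∀ g, x g ≠ 0 → ∃ j, g j = 1) :
    rr n x = 0 := by
  funext g
  by_contra hg
  obtain ⟨j, hj⟩ := rr_supp_one n hx g hg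
  have := rr_supp_lt n x g hg j j.isLt
  rw [this] at hj
  exact absurd hj (by decide)

end Stage3

section Stage4
variable {n : ℕ} {S : Finset (Face n)}

noncomputable def extz {k : ℕ} (z : Chain S k) : W n :=
  fun g => if h : g ∈ S ∧ fdim g = k then z ⟨g, h⟩ else 0

lemma extz_supp {k : ℕ} (z : Chain S k) :
    ∀ g, extz z g ≠ 0 → g ∈ S ∧ fdim g = k := by
  intro g hg
  by_cases h : g ∈ S ∧ fdim g = k
  · exact h
  · rw [extz, dif_neg h] at hg; exact absurd rfl hg

lemma extz_apply {k : ℕ} (z : Chain S k) (g : Face n) (hg : g ∈ S ∧ fdim g = k) :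
    extz z g = z ⟨g, hg⟩ := by
  rw [extz, dif_pos hg]

set_option maxHeartbeats 1000000 in
/-- Bridge: the formal boundary map agrees with `Dop` on extensions. -/
lemma bd_apply {k : ℕ} (z : Chain S k) (g : Face n) (hg : g ∈ S ∧ fdim g = k - 1) :
    bd S k z ⟨g, hg⟩ = Dop (extz z) g := by
  have step1 : bd S k z ⟨g, hg⟩
      = ∑ f : {f : Face n // f ∈ S ∧ fdim f = k},
          (if Adj f.1 g then extz z f.1 else 0) := by
    rw [bd]
    simp only [Matrix.mulVecLin_apply, Matrix.mulVec, dotProduct, Matrix.of_apply]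
    refine Finset.sum_congr rfl fun f _ => ?_
    rw [extz_apply z f.1 f.2, Subtype.eta]
    split <;> simp
  have step2 : (∑ f : {f : Face n // f ∈ S ∧ fdim f = k},
          (if Adj f.1 g then extz z f.1 else 0))
      = ∑ f ∈ Finset.univ.filter (fun f : Face n => Adj f g), extz z f := by
    calc (∑ f : {f : Face n // f ∈ S ∧ fdim f = k},
            (if Adj f.1 g then extz z f.1 else 0))
        = ∑ f ∈ S.filter (fun f => fdim f = k), (if Adj f g then extz z f else 0) :=
          (Finset.sum_subtype (p := fun f : Face n => f ∈ S ∧ fdim f = k)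
            (S.filter (fun f => fdim f = k)) (fun f => by simp [Finset.mem_filter])
            (fun f => if Adj f g then extz z f else 0)).symm
      _ = ∑ f ∈ Finset.univ, (if Adj f g then extz z f else 0) := by
          refine Finset.sum_subset (Finset.subset_univ _) ?_
          intro f _ hf
          have h0 : extz z f = 0 := by
            rw [extz, dif_neg]
            intro hc
            exact hf (Finset.mem_filter.mpr ⟨hc.1, hc.2⟩)
          rw [h0]
          simp
      _ = ∑ f ∈ Finset.univ.filter (fun f : Face n => Adj f g), extz z f :=
          (Finset.sum_filter _ _).symm
  have himg : Finset.univ.filter (fun f : Face n => Adj f g)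
      = (Finset.univ.filter (fun i : Fin n => g i ≠ 1)).image
          (fun i => Function.update g i 1) := by
    ext f
    simp only [Finset.mem_filter, Finset.mem_image, Finset.mem_univ, true_and]
    constructor
    · rintro ⟨i, hfi, hgi, hagree⟩
      refine ⟨i, hgi, ?_⟩
      funext j
      rcases eq_or_ne j i with rfl | hj
      · rw [Function.update_self, hfi]
      · rw [Function.update_of_ne hj, hagree j hj]
    · rintro ⟨i, hgi, rfl⟩
      exact ⟨i, Function.update_self i 1 g, hgi,
        fun j hj => (Function.update_of_ne hj 1 g).symm⟩
  have hinj : ∀ i ∈ Finset.univ.filter (fun i : Fin n => g i ≠ 1),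
      ∀ i' ∈ Finset.univ.filter (fun i : Fin n => g i ≠ 1),
      Function.update g i 1 = Function.update g i' 1 → i = i' := by
    intro i hi i' hi' heq
    by_contra hne
    have := congrFun heq i
    rw [Function.update_self, Function.update_of_ne hne] at this
    exact (Finset.mem_filter.mp hi).2 this.symm
  rw [step1, step2, himg, Finset.sum_image hinj, Dop, ← Finset.sum_filter]

lemma Dop_supp (hS : StrongInductive S) {k : ℕ} (hk : 1 ≤ k) {x : W n}
    (hx : ∀ g, x g ≠ 0 → g ∈ S ∧ fdim g = k) :
    ∀ g, Dop x g ≠ 0 → g ∈ S ∧ fdim g = k - 1 := by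
  intro g hg
  obtain ⟨i, hgi, hxi⟩ := Dop_ne hg
  obtain ⟨hmem, hdim⟩ := hx _ hxi
  have hdimg : fdim g = k - 1 := by
    have := fdim_update_one hgi
    omega
  refine ⟨?_, hdimg⟩
  rcases fin3_cases (g i) with h0 | h0 | h0
  · refine hS.1 _ hmem g (fun j => ?_)
    rcases eq_or_ne j i with rfl | hj
    · rw [Function.update_self, h0]; decide
    · rw [Function.update_of_ne hj]
  · exact absurd h0 hgi
  · have := star_mem hS hmem (Function.update_self i 1 g)
    rwa [Function.update_idem, ← h0, Function.update_eq_self] at this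

lemma HH_supp (hS : StrongInductive S) (m : ℕ) {k : ℕ} {x : W n}
    (hx : ∀ g, x g ≠ 0 → g ∈ S ∧ fdim g = k) :
    ∀ g, HH m x g ≠ 0 → g ∈ S ∧ fdim g = k + 1 := by
  induction m with
  | zero => intro g hg; exact absurd rfl hg
  | succ m ih =>
    intro g hg
    rw [HH, Pi.add_apply] at hg
    by_cases hterm : HH m x g ≠ 0
    · exact ih g hterm
    · push_neg at hterm
      rw [hterm, add_zero] at hg
      by_cases h : m < n
      · rw [dif_pos h] at hg
        obtain ⟨h1, hy⟩ := hOp_ne hg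
        obtain ⟨hmem, hdim⟩ := rr_supp_S hS m hx _ hy
        constructor
        · refine hS.1 _ hmem g (fun j => ?_)
          rcases eq_or_ne j ⟨m, h⟩ with rfl | hj
          · rw [Function.update_self, h1]; decide
          · rw [Function.update_of_ne hj]
        · have := fdim_update_two h1
          omega
      · rw [dif_neg h] at hg
        exact absurd rfl hg

lemma rr_zero (m : ℕ) : rr m (0 : W n) = 0 := by
  induction m with
  | zero => rfl
  | succ m ih =>
    by_cases h : m < n
    · rw [rr, dif_pos h, ih]
      funext g
      simp [rOp]
    · rw [rr, dif_neg h, ih]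

lemma HH_zero (m : ℕ) : HH m (0 : W n) = 0 := by
  induction m with
  | zero => rfl
  | succ m ih =>
    rw [HH, ih, add_zero]
    by_cases h : m < n
    · rw [dif_pos h, rr_zero]
      funext g
      simp [hOp]
    · rw [dif_neg h]

/-- Key existence lemma: if `Dop (extz z) = 0` and `rr n (extz z) = 0` then
`z` is a boundary. -/
lemma exists_preimage (hS : StrongInductive S) {k : ℕ} (z : Chain S k)
    (hz : Dop (extz z) = 0) (hrr : rr n (extz z) = 0) :
    ∃ w : Chain S (k + 1), bd S (k + 1) w = z := by
  classical
  set x := extz z with hx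
  have hmaster := master n x
  rw [hz, HH_zero, add_zero, hrr, add_zero] at hmaster
  have hsupp := extz_supp z
  refine ⟨fun f => HH n x f.1, ?_⟩
  have hext : extz (fun f : {f : Face n // f ∈ S ∧ fdim f = k + 1} => HH n x f.1)
      = HH n x := by
    funext f
    by_cases h : f ∈ S ∧ fdim f = k + 1
    · rw [extz_apply _ f h]
    · rw [extz, dif_neg h]
      by_contra hne
      exact h (HH_supp hS n hsupp f (fun hc => hne hc.symm))
  funext f
  obtain ⟨g, hg⟩ := f
  rw [bd_apply _ g hg, hext, hmaster, hx, extz_apply z g hg]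

noncomputable def tau (x : W n) : ZMod 2 :=
  ∑ f ∈ Finset.univ.filter (fun f : Face n => fdim f = 0), x f

lemma tau_rOp (i : Fin n) (x : W n) : tau (rOp i x) = tau x := by
  classical
  have memA : ∀ f : Face n, ∀ p : Face n → Prop, ∀ inst : DecidablePred p,
      f ∈ (Finset.univ.filter (fun f : Face n => fdim f = 0)).filter p ↔ (fdim f = 0 ∧ p f) := by
    intro f p inst
    simp [Finset.mem_filter]
  have step1 : tau (rOp i x)
      = ∑ f ∈ (Finset.univ.filter (fun f : Face n => fdim f = 0)).filter
          (fun f => f i = 0), (x f + x (Function.update f i 2)) :=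
    (Finset.sum_filter (fun f => f i = 0)
      (fun f => x f + x (Function.update f i 2))).symm
  have step2 : ∑ f ∈ (Finset.univ.filter (fun f : Face n => fdim f = 0)).filter
          (fun f => f i = 0), x (Function.update f i 2)
      = ∑ f ∈ (Finset.univ.filter (fun f : Face n => fdim f = 0)).filter
          (fun f => ¬ f i = 0), x f := by
    refine Finset.sum_bij' (fun f _ => Function.update f i 2)
      (fun f _ => Function.update f i 0) ?_ ?_ ?_ ?_ ?_
    · intro f hf
      obtain ⟨hfA, hfi⟩ := (memA f _ _).mp hf
      refine (memA _ _ _).mpr ⟨?_, ?_⟩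
      · rw [fdim_update_ne (by rw [hfi]; decide) (by decide)]; exact hfA
      · show ¬ Function.update f i 2 i = 0
        rw [Function.update_self]; decide
    · intro f hf
      obtain ⟨hfA, hfi⟩ := (memA f _ _).mp hf
      refine (memA _ _ _).mpr ⟨?_, ?_⟩
      · rw [fdim_update_ne ((fdim_eq_zero_iff f).mp hfA i) (by decide)]; exact hfA
      · show Function.update f i 0 i = 0
        rw [Function.update_self]
    · intro f hf
      obtain ⟨hfA, hfi⟩ := (memA f _ _).mp hf
      show Function.update (Function.update f i 2) i 0 = f
      rw [Function.update_idem, ← hfi, Function.update_eq_self]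
    · intro f hf
      obtain ⟨hfA, hfi⟩ := (memA f _ _).mp hf
      have hfi2 : f i = 2 := by
        rcases fin3_cases (f i) with h | h | h
        · exact absurd h hfi
        · exact absurd h ((fdim_eq_zero_iff f).mp hfA i)
        · exact h
      show Function.update (Function.update f i 0) i 2 = f
      rw [Function.update_idem, ← hfi2, Function.update_eq_self]
    · intro f _; rfl
  rw [step1, Finset.sum_add_distrib, step2]
  conv_rhs => rw [tau,
    ← Finset.filter_union_filter_not_eq (fun f => f i = 0)
      (Finset.univ.filter (fun f : Face n => fdim f = 0))]
  rw [Finset.sum_union (Finset.disjoint_filter_filter_not _ _ _)]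

lemma tau_rr (m : ℕ) (x : W n) : tau (rr m x) = tau x := by
  induction m with
  | zero => rfl
  | succ m ih =>
    by_cases h : m < n
    · rw [rr, dif_pos h, tau_rOp, ih]
    · rw [rr, dif_neg h, ih]

lemma rr_n_eq_zero_of_tau {x : W n} (ht : tau x = 0) : rr n x = 0 := by
  classical
  have hsupp : ∀ g, rr n x g ≠ 0 → g = (fun _ => 0 : Face n) := by
    intro g hg
    funext j
    exact rr_supp_lt n x g hg j j.isLt
  have hzero : (fun _ => 0 : Face n) ∈ Finset.univ.filter (fun f : Face n => fdim f = 0) := by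
    refine Finset.mem_filter.mpr ⟨Finset.mem_univ _, ?_⟩
    rw [fdim_eq_zero_iff]
    intro i; decide
  have hval : rr n x (fun _ => 0) = tau (rr n x) := by
    rw [tau, Finset.sum_eq_single (fun _ => 0 : Face n)]
    · intro b _ hb
      by_contra hc
      exact hb (hsupp b hc)
    · intro hc
      exact absurd hzero hc
  funext g
  by_contra hg
  have := hsupp g hg
  rw [this] at hg
  rw [hval, tau_rr, ht] at hg
  exact hg rfl

end Stage4

section Stage5
variable {n : ℕ} {S : Finset (Face n)}

def swap3 : Fin 3 → Fin 3 := ![2, 1, 0]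

lemma swap3_swap3 (a : Fin 3) : swap3 (swap3 a) = a := by
  fin_cases a <;> decide

lemma sum_Dop (x : W n) : ∑ g : Face n, Dop x g = 0 := by
  classical
  have hcomm : ∑ g : Face n, Dop x g
      = ∑ i : Fin n, ∑ g : Face n, (if g i ≠ 1 then x (Function.update g i 1) else 0) :=
    Finset.sum_comm
  rw [hcomm]
  refine Finset.sum_eq_zero fun i _ => ?_
  refine Finset.sum_involution (fun g _ => Function.update g i (swap3 (g i)))
    ?_ ?_ (fun g _ => Finset.mem_univ _) ?_
  · intro g _
    rcases fin3_cases (g i) with h0 | h0 | h0 <;> rw [h0]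
    · rw [if_pos (by decide), if_pos (by rw [Function.update_self]; decide),
        Function.update_idem]
      exact z2 _
    · rw [if_neg (by decide), if_neg (by rw [Function.update_self]; decide), add_zero]
    · rw [if_pos (by decide), if_pos (by rw [Function.update_self]; decide),
        Function.update_idem]
      exact z2 _
  · intro g _ hne hc
    have this1 := congrFun hc i
    rw [Function.update_self] at this1
    have hgi : g i ≠ 1 := by
      intro h1
      rw [if_neg (by rw [h1]; decide)] at hne
      exact hne rfl
    rcases fin3_cases (g i) with h0 | h0 | h0
    · rw [h0] at this1; exact absurd this1 (by decide)
    · exact hgi h0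
    · rw [h0] at this1; exact absurd this1 (by decide)
  · intro g _
    rw [Function.update_self, Function.update_idem, swap3_swap3, Function.update_eq_self]

lemma Dop_extz_dim0 (z : Chain S 0) : Dop (extz z) = 0 := by
  funext g
  by_contra h
  obtain ⟨i, hgi, hx⟩ := Dop_ne h
  have hd := (extz_supp z _ hx).2
  rw [fdim_update_one hgi] at hd
  omega

lemma bd0_eq_zero (z : Chain S 0) : bd S 0 z = 0 := by
  funext f
  exact (bd_apply z f.1 f.2).trans (congrFun (Dop_extz_dim0 z) f.1)

lemma ker_sub (hS : StrongInductive S) {k : ℕ} (hk : 0 < k) (z : Chain S k)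
    (hz : bd S k z = 0) : ∃ w : Chain S (k + 1), bd S (k + 1) w = z := by
  refine exists_preimage hS z ?_ ?_
  · funext g
    by_cases hg : g ∈ S ∧ fdim g = k - 1
    · rw [← bd_apply z g hg, hz]; rfl
    · by_contra hne
      exact hg (Dop_supp hS hk (extz_supp z) g hne)
  · refine rr_n_eq_zero ?_
    intro g hgne
    obtain ⟨_, hd⟩ := extz_supp z g hgne
    by_contra hc
    push_neg at hc
    have h0 : fdim g = 0 := (fdim_eq_zero_iff g).mpr hc
    omega

lemma tau_extz (z : Chain S 0) :
    tau (extz z) = ∑ f : {f : Face n // f ∈ S ∧ fdim f = 0}, z f := by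
  classical
  calc tau (extz z)
      = ∑ f ∈ S.filter (fun f => fdim f = 0), extz z f := by
        refine (Finset.sum_subset (Finset.filter_subset_filter _ (Finset.subset_univ S)) ?_).symm
        intro f _ hf
        rw [extz, dif_neg]
        intro hc
        exact hf (Finset.mem_filter.mpr ⟨hc.1, hc.2⟩)
    _ = ∑ f : {f : Face n // f ∈ S ∧ fdim f = 0}, extz z f.1 :=
        Finset.sum_subtype (p := fun f : Face n => f ∈ S ∧ fdim f = 0)
          (S.filter (fun f => fdim f = 0)) (fun f => by simp [Finset.mem_filter])
          (fun f => extz z f)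
    _ = ∑ f : {f : Face n // f ∈ S ∧ fdim f = 0}, z f :=
        Finset.sum_congr rfl (fun f _ => by rw [extz_apply z f.1 f.2, Subtype.eta])

lemma sum_bd1 (hS : StrongInductive S) (w : Chain S 1) :
    ∑ g : {f : Face n // f ∈ S ∧ fdim f = 0}, bd S 1 w g = 0 := by
  classical
  calc ∑ g : {f : Face n // f ∈ S ∧ fdim f = 0}, bd S 1 w g
      = ∑ g : {f : Face n // f ∈ S ∧ fdim f = 0}, Dop (extz w) g.1 :=
        Finset.sum_congr rfl (fun g _ => bd_apply w g.1 g.2)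
    _ = ∑ g ∈ S.filter (fun f => fdim f = 0), Dop (extz w) g :=
        (Finset.sum_subtype (p := fun f : Face n => f ∈ S ∧ fdim f = 0)
          (S.filter (fun f => fdim f = 0)) (fun f => by simp [Finset.mem_filter])
          (fun f => Dop (extz w) f)).symm
    _ = ∑ g : Face n, Dop (extz w) g := by
        refine Finset.sum_subset (Finset.subset_univ _) ?_
        intro g _ hg
        by_contra hne
        obtain ⟨h1, h2⟩ := Dop_supp hS (le_refl 1) (extz_supp w) g hne
        exact hg (Finset.mem_filter.mpr ⟨h1, h2⟩)
    _ = 0 := sum_Dop _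

end Stage5

/-- For a nonempty strong-inductive cubical set `S ⊆ B_n`, the homology of `(S, ∂)`
satisfies `H₀(S) ≅ ℤ/2ℤ` and `H_i(S) = 0` for `i > 0`. -/
theorem statement0 (n : ℕ) (S : Finset (Face n)) (hne : S.Nonempty)
    (hS : StrongInductive S) :
    Nonempty (CubeHomology S 0 ≃ₗ[ZMod 2] ZMod 2) ∧
      ∀ i : ℕ, 0 < i → Subsingleton (CubeHomology S i) := by
  classical
  constructor
  · have hf0 : (fun _ => 0 : Face n) ∈ S ∧ fdim (fun _ => 0 : Face n) = 0 :=
      ⟨zero_mem hS hne, (fdim_eq_zero_iff _).mpr (fun i => by decide)⟩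
    let σ : Chain S 0 →ₗ[ZMod 2] ZMod 2 :=
      { toFun := fun z => ∑ f, z f,
        map_add' := fun a b => by simp [Finset.sum_add_distrib],
        map_smul' := fun c a => by simp [Finset.mul_sum] }
    let φ : LinearMap.ker (bd S 0) →ₗ[ZMod 2] ZMod 2 :=
      σ.comp (Submodule.subtype _)
    have hsurj : Function.Surjective φ := by
      intro c
      refine ⟨⟨c • Pi.single (⟨(fun _ => 0 : Face n), hf0⟩ :
          {f : Face n // f ∈ S ∧ fdim f = 0}) 1, ?_⟩, ?_⟩
      · rw [LinearMap.mem_ker, bd0_eq_zero]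
      · show (∑ f, (c • Pi.single (⟨(fun _ => 0 : Face n), hf0⟩ :
            {f : Face n // f ∈ S ∧ fdim f = 0}) (1 : ZMod 2)) f) = c
        simp only [Pi.smul_apply, smul_eq_mul]
        rw [← Finset.mul_sum, Finset.sum_pi_single', if_pos (Finset.mem_univ _), mul_one]
    have hker : LinearMap.ker φ
        = Submodule.comap (LinearMap.ker (bd S 0)).subtype (LinearMap.range (bd S 1)) := by
      ext z
      simp only [LinearMap.mem_ker, Submodule.mem_comap, LinearMap.mem_range,
        Submodule.subtype_apply, LinearMap.coe_comp, Function.comp_apply]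
      constructor
      · intro h0
        obtain ⟨w, hw⟩ := exists_preimage hS z.1 (Dop_extz_dim0 z.1)
          (rr_n_eq_zero_of_tau (by rw [tau_extz]; exact h0))
        exact ⟨w, hw⟩
      · rintro ⟨w, hw⟩
        show (∑ f, z.1 f) = 0
        rw [← hw]
        exact sum_bd1 hS w
    exact ⟨(Submodule.quotEquivOfEq _ _ hker.symm).trans
      (φ.quotKerEquivOfSurjective hsurj)⟩
  · intro i hi
    rw [Submodule.Quotient.subsingleton_iff, eq_top_iff]
    rintro z -
    rw [Submodule.mem_comap]
    obtain ⟨w, hw⟩ := ker_sub hS hi z.1 (LinearMap.mem_ker.mp z.2)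
    exact ⟨w, hw⟩
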